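/- If φ(x) = x^p (p ≥ 1) and ψ(x) = exp(x^β) − 1 (β > 0), then ρ(x) = sup_{y ≥ 0} (φ(xy) − ψ(y))/y is equivalent to x ↦ x^p (log x)^{(p−1)/β} for large x. -/

import Mathlib

open Filter Topology MeasureTheory
open scoped ENNReal
noncomputable section

/-- A Young function: strictly increasing, convex on `[0,∞)`, vanishing at `0`. -/
def IsYoung (f : ℝ → ℝ) : Prop :=
  StrictMonoOn f (Set.Ici 0) ∧ ConvexOn ℝ (Set.Ici 0) f ∧ f 0 = 0

/-- Legendre transform of a real function (sup over `y ≥ 0`), `ℝ≥0∞`-valued. -/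
def Leg (f : ℝ → ℝ) (x : ℝ) : ℝ≥0∞ :=
  ⨆ y : {y : ℝ // 0 ≤ y}, ENNReal.ofReal (x * y - f y)

/-- Legendre transform of an `ℝ≥0∞`-valued function. -/
def LegE (f : ℝ → ℝ≥0∞) (x : ℝ) : ℝ≥0∞ :=
  ⨆ y : {y : ℝ // 0 ≤ y}, (ENNReal.ofReal (x * y) - f y)

/-- Monotone extension of a real function on `[0,∞)` to `ℝ≥0∞` arguments. -/
def extE (f : ℝ → ℝ) (t : ℝ≥0∞) : ℝ≥0∞ :=
  ⨆ s : {s : ℝ // 0 ≤ s ∧ ENNReal.ofReal s ≤ t}, ENNReal.ofReal (f s)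

/-- Monotone extension of an `ℝ≥0∞`-valued function to `ℝ≥0∞` arguments. -/
def extLT (f : ℝ → ℝ≥0∞) (t : ℝ≥0∞) : ℝ≥0∞ :=
  ⨆ s : {s : ℝ // 0 ≤ s ∧ ENNReal.ofReal s ≤ t}, f s

/-- Generalized (right-continuous) inverse of an `ℝ≥0∞`-valued function. -/
def invE (g : ℝ → ℝ≥0∞) (t : ℝ≥0∞) : ℝ≥0∞ :=
  ⨅ s : {s : ℝ // 0 ≤ s ∧ t ≤ g s}, ENNReal.ofReal s

/-- `ρ(x) = sup_{y ≥ 0} (φ(xy) - ψ(y))/y`. -/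
def rhoSup (φ ψ : ℝ → ℝ) (x : ℝ) : ℝ≥0∞ :=
  ⨆ y : {y : ℝ // 0 ≤ y}, ENNReal.ofReal ((φ (x * y) - ψ y) / y)

/-- `ζ(x) = sup_{y ≥ 0} (φ(xy) - ψ(y)/y)`. -/
def zetaSup (φ ψ : ℝ → ℝ) (x : ℝ) : ℝ≥0∞ :=
  ⨆ y : {y : ℝ // 0 ≤ y}, ENNReal.ofReal (φ (x * y) - ψ y / y)

/-- Domination order on real functions: `f(x) ≤ C₁ g(C₂ x)` for large `x`. -/
def DominR (f g : ℝ → ℝ) : Prop :=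
  ∃ C₁ C₂ x₀ : ℝ, 0 < C₁ ∧ 0 < C₂ ∧ 0 < x₀ ∧ ∀ x ≥ x₀, f x ≤ C₁ * g (C₂ * x)

/-- Equivalence of real functions: mutual domination. -/
def EquivR (f g : ℝ → ℝ) : Prop := DominR f g ∧ DominR g f

/-- Domination order on `ℝ≥0∞`-valued functions. -/
def DominE (f g : ℝ → ℝ≥0∞) : Prop :=
  ∃ C₁ C₂ x₀ : ℝ, 0 < C₁ ∧ 0 < C₂ ∧ 0 < x₀ ∧
    ∀ x ≥ x₀, f x ≤ ENNReal.ofReal C₁ * g (C₂ * x)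

/-- Equivalence of `ℝ≥0∞`-valued functions: mutual domination. -/
def EquivE (f g : ℝ → ℝ≥0∞) : Prop := DominE f g ∧ DominE g f

lemma realUpper11 (p β : ℝ) (hp : 1 ≤ p) (hβ : 0 < β)
    {x y : ℝ} (hx : Real.exp (max 1 ((4 * p / β) ^ (2:ℝ) / (2 * p + 2))) ≤ x) (hy : 0 ≤ y) :
    ((x * y) ^ p - (Real.exp (y ^ β) - 1)) / y ≤
      (2 * p + 2) ^ ((p - 1) / β) * (x ^ p * Real.log x ^ ((p - 1) / β)) := by
  have hp0 : (0:ℝ) < p := lt_of_lt_of_le one_pos hp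
  have hx0 : 0 < x := lt_of_lt_of_le (Real.exp_pos _) hx
  have hlog : max 1 ((4 * p / β) ^ (2:ℝ) / (2 * p + 2)) ≤ Real.log x :=
    (Real.le_log_iff_exp_le hx0).2 hx
  have hlog1 : 1 ≤ Real.log x := le_trans (le_max_left _ _) hlog
  have hK : (0:ℝ) < 2 * p + 2 := by linarith
  have hRHS : 0 ≤ (2 * p + 2) ^ ((p - 1) / β) * (x ^ p * Real.log x ^ ((p - 1) / β)) :=
    mul_nonneg (Real.rpow_nonneg hK.le _)
      (mul_nonneg (Real.rpow_nonneg hx0.le _) (Real.rpow_nonneg (by linarith) _))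
  rcases hy.eq_or_lt with h0 | hy0
  · rw [← h0, div_zero]; exact hRHS
  by_cases hcase : y ^ β ≤ (2 * p + 2) * Real.log x
  · -- small y regime
    have h1 : ((x * y) ^ p - (Real.exp (y ^ β) - 1)) / y ≤ (x * y) ^ p / y := by
      have : (1:ℝ) ≤ Real.exp (y ^ β) :=
        Real.one_le_exp (Real.rpow_nonneg hy _)
      gcongr
      linarith
    have h2 : (x * y) ^ p / y = x ^ p * y ^ (p - 1) := by
      rw [Real.mul_rpow hx0.le hy, mul_div_assoc]
      congr 1
      rw [Real.rpow_sub hy0, Real.rpow_one]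
    have hyle : y ≤ ((2 * p + 2) * Real.log x) ^ β⁻¹ := by
      have := Real.rpow_le_rpow (Real.rpow_nonneg hy β) hcase (inv_nonneg.2 hβ.le)
      rwa [Real.rpow_rpow_inv hy hβ.ne'] at this
    have h3 : y ^ (p - 1) ≤ ((2 * p + 2) * Real.log x) ^ ((p - 1) / β) := by
      calc y ^ (p - 1) ≤ (((2 * p + 2) * Real.log x) ^ β⁻¹) ^ (p - 1) :=
            Real.rpow_le_rpow hy hyle (by linarith)
        _ = ((2 * p + 2) * Real.log x) ^ ((p - 1) / β) := by
            rw [← Real.rpow_mul (by positivity)]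
            congr 1
            field_simp
    have h4 : ((2 * p + 2) * Real.log x) ^ ((p - 1) / β) =
        (2 * p + 2) ^ ((p - 1) / β) * Real.log x ^ ((p - 1) / β) :=
      Real.mul_rpow hK.le (by linarith)
    calc ((x * y) ^ p - (Real.exp (y ^ β) - 1)) / y ≤ x ^ p * y ^ (p - 1) := by
          rw [← h2]; exact h1
      _ ≤ x ^ p * ((2 * p + 2) ^ ((p - 1) / β) * Real.log x ^ ((p - 1) / β)) := by
          rw [← h4]
          exact mul_le_mul_of_nonneg_left h3 (Real.rpow_nonneg hx0.le _)
      _ = (2 * p + 2) ^ ((p - 1) / β) * (x ^ p * Real.log x ^ ((p - 1) / β)) := by ring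
  · -- large y regime : numerator is nonpositive
    push_neg at hcase
    have hxy0 : 0 < x * y := mul_pos hx0 hy0
    have hyb4 : (4:ℝ) ≤ y ^ β := by nlinarith
    have hM : (4 * p / β) ^ (2:ℝ) ≤ (2 * p + 2) * Real.log x := by
      have h := le_trans (le_max_right _ _) hlog
      rw [div_le_iff₀ hK] at h
      linarith [h]
    have hA0 : (0:ℝ) < 4 * p / β := by positivity
    have hAle : 4 * p / β ≤ y ^ (β / 2) := by
      have h1 : (4 * p / β) ^ (2:ℝ) ≤ y ^ β := le_trans hM hcase.le
      have h2 := Real.rpow_le_rpow (Real.rpow_nonneg hA0.le _) h1 (by norm_num : (0:ℝ) ≤ 2⁻¹)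
      rw [← Real.rpow_mul hA0.le, ← Real.rpow_mul hy] at h2
      have e1 : (2:ℝ) * 2⁻¹ = 1 := by norm_num
      have e2 : β * 2⁻¹ = β / 2 := by ring
      rw [e1, e2, Real.rpow_one] at h2
      exact h2
    have hsplit : y ^ β = y ^ (β / 2) * y ^ (β / 2) := by
      rw [← Real.rpow_add hy0]; ring_nf
    have hplogy : p * Real.log y ≤ y ^ β / 2 := by
      have hA : 0 ≤ y ^ (β / 2) := Real.rpow_nonneg hy _
      have h1 : Real.log y ≤ y ^ (β / 2) / (β / 2) := Real.log_le_rpow_div hy (by positivity)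
      have h1' : (β / 2) * Real.log y ≤ y ^ (β / 2) := by
        have := (le_div_iff₀ (by positivity : (0:ℝ) < β / 2)).1 h1
        linarith [this]
      have hAle' : 4 * p ≤ y ^ (β / 2) * β := by
        rw [div_le_iff₀ hβ] at hAle
        exact hAle
      rcases le_or_gt (Real.log y) 0 with hly | hly
      · nlinarith [mul_nonneg hA hA, hsplit, mul_nonpos_of_nonneg_of_nonpos hp0.le hly]
      · have P1 : 0 ≤ (y ^ (β / 2) * β - 4 * p) * Real.log y :=
          mul_nonneg (by linarith) hly.le
        have P3 : (β / 2) * Real.log y * y ^ (β / 2) ≤ y ^ (β / 2) * y ^ (β / 2) :=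
          mul_le_mul_of_nonneg_right h1' hA
        nlinarith [P1, P3, hsplit]
    have hplogx : p * Real.log x + Real.log 2 ≤ y ^ β / 2 := by
      have hl2 : Real.log 2 ≤ 1 := by
        have := Real.log_two_lt_d9; linarith
      nlinarith
    have hlogxy : Real.log (x * y) = Real.log x + Real.log y :=
      Real.log_mul hx0.ne' hy0.ne'
    have hkey : (x * y) ^ p ≤ Real.exp (y ^ β) - 1 := by
      have h1 : (x * y) ^ p = Real.exp (Real.log (x * y) * p) :=
        Real.rpow_def_of_pos hxy0 p
      have h2 : Real.log (x * y) * p ≤ y ^ β - Real.log 2 := by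
        rw [hlogxy]; nlinarith
      have h3 : Real.exp (y ^ β - Real.log 2) = Real.exp (y ^ β) / 2 := by
        rw [Real.exp_sub, Real.exp_log two_pos]
      have h4 : Real.exp (y ^ β) / 2 ≤ Real.exp (y ^ β) - 1 := by
        have := Real.add_one_le_exp (y ^ β)
        linarith
      calc (x * y) ^ p = Real.exp (Real.log (x * y) * p) := h1
        _ ≤ Real.exp (y ^ β - Real.log 2) := Real.exp_le_exp.2 h2
        _ = Real.exp (y ^ β) / 2 := h3
        _ ≤ Real.exp (y ^ β) - 1 := h4
    have : ((x * y) ^ p - (Real.exp (y ^ β) - 1)) / y ≤ 0 :=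
      div_nonpos_iff.2 (Or.inr ⟨by linarith, hy0.le⟩)
    exact le_trans this hRHS

lemma realLower11 (p β : ℝ) (hp : 1 ≤ p) (hβ : 0 < β) {x : ℝ}
    (hx : Real.exp (max 1 ((2:ℝ) ^ (β / p))) ≤ x) :
    x ^ p * Real.log x ^ ((p - 1) / β) ≤
      2 * (((x * Real.log x ^ (1 / β)) ^ p -
        (Real.exp ((Real.log x ^ (1 / β)) ^ β) - 1)) / Real.log x ^ (1 / β)) := by
  have hp0 : (0:ℝ) < p := lt_of_lt_of_le one_pos hp
  have hx0 : 0 < x := lt_of_lt_of_le (Real.exp_pos _) hx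
  have hlog : max 1 ((2:ℝ) ^ (β / p)) ≤ Real.log x := (Real.le_log_iff_exp_le hx0).2 hx
  have hlog1 : 1 ≤ Real.log x := le_trans (le_max_left _ _) hlog
  have hlog0 : 0 < Real.log x := lt_of_lt_of_le one_pos hlog1
  have hx1 : (1:ℝ) ≤ x := by
    have := Real.exp_le_exp.2 (le_trans (le_max_left 1 ((2:ℝ) ^ (β / p))) (le_refl _))
    calc (1:ℝ) ≤ Real.exp 1 := by linarith [Real.add_one_le_exp (1:ℝ)]
      _ ≤ Real.exp (max 1 ((2:ℝ) ^ (β / p))) := Real.exp_le_exp.2 (le_max_left _ _)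
      _ ≤ x := hx
  set L := Real.log x with hL
  have hy0 : (0:ℝ) < L ^ (1 / β) := Real.rpow_pos_of_pos hlog0 _
  have hyβ : (L ^ (1 / β)) ^ β = L := by
    rw [← Real.rpow_mul hlog0.le, one_div, inv_mul_cancel₀ hβ.ne', Real.rpow_one]
  have hexp : Real.exp L = x := Real.exp_log hx0
  have hmul : (x * L ^ (1 / β)) ^ p = x ^ p * L ^ (p / β) := by
    rw [Real.mul_rpow hx0.le hy0.le, ← Real.rpow_mul hlog0.le]
    congr 2
    field_simp
  rw [hyβ, hexp, hmul]
  have hLp : (2:ℝ) ≤ L ^ (p / β) := by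
    have h2 : (2:ℝ) ^ (β / p) ≤ L := le_trans (le_max_right _ _) hlog
    have h3 := Real.rpow_le_rpow (by positivity) h2 (by positivity : (0:ℝ) ≤ p / β)
    rw [← Real.rpow_mul (by norm_num : (0:ℝ) ≤ 2)] at h3
    have h4 : β / p * (p / β) = 1 := by field_simp
    rwa [h4, Real.rpow_one] at h3
  have hxp : x ≤ x ^ p := by
    calc x = x ^ (1:ℝ) := (Real.rpow_one x).symm
      _ ≤ x ^ p := Real.rpow_le_rpow_of_exponent_le hx1 hp
  have h2x : 2 * x ≤ x ^ p * L ^ (p / β) := by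
    calc 2 * x ≤ L ^ (p / β) * x ^ p :=
          mul_le_mul hLp hxp (by linarith) (by positivity)
      _ = x ^ p * L ^ (p / β) := mul_comm _ _
  rw [mul_div_assoc', le_div_iff₀ hy0]
  have hLcomb : L ^ ((p - 1) / β) * L ^ (1 / β) = L ^ (p / β) := by
    rw [← Real.rpow_add hlog0]
    congr 1
    field_simp
    ring
  calc x ^ p * L ^ ((p - 1) / β) * L ^ (1 / β) = x ^ p * L ^ (p / β) := by
        rw [mul_assoc, hLcomb]
    _ ≤ 2 * (x ^ p * L ^ (p / β) - (x - 1)) := by linarith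

/-- If φ(x) = x^p (p ≥ 1) and ψ(x) = exp(x^β) − 1 (β > 0) then
ρ(x) ≃ x^p (log x)^((p−1)/β). -/
theorem stmt11 (p β : ℝ) (hp : 1 ≤ p) (hβ : 0 < β) :
    EquivE (rhoSup (fun t => t ^ p) (fun t => Real.exp (t ^ β) - 1))
      (fun x => ENNReal.ofReal (x ^ p * Real.log x ^ ((p - 1) / β))) := by
  have hp0 : (0:ℝ) < p := lt_of_lt_of_le one_pos hp
  constructor
  · -- ρ ≼ target
    refine ⟨(2 * p + 2) ^ ((p - 1) / β), 1,
      Real.exp (max 1 ((4 * p / β) ^ (2:ℝ) / (2 * p + 2))),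
      Real.rpow_pos_of_pos (by linarith) _, one_pos, Real.exp_pos _, ?_⟩
    intro x hx
    rw [one_mul, rhoSup]
    refine iSup_le fun z => ?_
    obtain ⟨y, hy⟩ := z
    simp only
    rw [← ENNReal.ofReal_mul (Real.rpow_nonneg (by linarith) _)]
    exact ENNReal.ofReal_le_ofReal (realUpper11 p β hp hβ hx hy)
  · -- target ≼ ρ
    refine ⟨2, 1, Real.exp (max 1 ((2:ℝ) ^ (β / p))), two_pos, one_pos, Real.exp_pos _, ?_⟩
    intro x hx
    rw [one_mul, rhoSup]
    have hx0 : 0 < x := lt_of_lt_of_le (Real.exp_pos _) hx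
    have hlog1 : 1 ≤ Real.log x :=
      le_trans (le_max_left _ _) ((Real.le_log_iff_exp_le hx0).2 hx)
    have hy0 : (0:ℝ) ≤ Real.log x ^ (1 / β) :=
      Real.rpow_nonneg (by linarith) _
    calc ENNReal.ofReal (x ^ p * Real.log x ^ ((p - 1) / β))
        ≤ ENNReal.ofReal 2 * ENNReal.ofReal
            (((x * Real.log x ^ (1 / β)) ^ p -
              (Real.exp ((Real.log x ^ (1 / β)) ^ β) - 1)) / Real.log x ^ (1 / β)) := by
          rw [← ENNReal.ofReal_mul (by norm_num : (0:ℝ) ≤ 2)]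
          exact ENNReal.ofReal_le_ofReal (realLower11 p β hp hβ hx)
      _ ≤ ENNReal.ofReal 2 *
          ⨆ y : {y : ℝ // 0 ≤ y}, ENNReal.ofReal
            (((fun t => t ^ p) (x * (y:ℝ)) - (Real.exp ((y:ℝ) ^ β) - 1)) / (y:ℝ)) :=
          mul_le_mul_right
            (le_iSup (fun y : {y : ℝ // 0 ≤ y} => ENNReal.ofReal
              (((fun t => t ^ p) (x * (y:ℝ)) - (Real.exp ((y:ℝ) ^ β) - 1)) / (y:ℝ)))
              ⟨Real.log x ^ (1 / β), hy0⟩) _
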